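/- There exist an assignment of two submodular utility functions with binary marginal gains to two agents on a cycle of length four such that no connected allocation is PMMS. -/

import Mathlib

namespace GraphFair

variable {V : Type*}

/-- A bundle is connected if it is empty or induces a connected subgraph of `G`. -/
def BundleConn (G : SimpleGraph V) (B : Finset V) : Prop :=
  B = ∅ ∨ (G.induce (B : Set V)).Connected

/-- A connected allocation of all the items among `n` agents: the bundles cover `V`,
are pairwise disjoint, and each bundle is connected in `G`. -/
def IsConnAlloc (G : SimpleGraph V) {n : ℕ} (A : Fin n → Finset V) : Prop :=
  (∀ v : V, ∃ i, v ∈ A i) ∧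
  (∀ i j : Fin n, i ≠ j → Disjoint (A i) (A j)) ∧
  (∀ i, BundleConn G (A i))

variable [DecidableEq V]

/-- Partitions of `X` into two bundles, each connected in the induced subgraph `G[X]`
(for `Y ⊆ X`, connectivity of `Y` in `G[X]` is the same as connectivity of `Y` in `G`). -/
def Part2 (G : SimpleGraph V) (X : Finset V) : Set (Finset V × Finset V) :=
  {p | p.1 ∪ p.2 = X ∧ Disjoint p.1 p.2 ∧ BundleConn G p.1 ∧ BundleConn G p.2}

/-- The pairwise maximin share of a bundle `X` with respect to utility `u`:
the maximum over partitions of `X` into two connected bundles of the minimum utility. -/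
noncomputable def pmms (G : SimpleGraph V) (u : Finset V → ℝ) (X : Finset V) : ℝ :=
  sSup ((fun p : Finset V × Finset V => min (u p.1) (u p.2)) '' Part2 G X)

/-- The `n`-agent maximin share of the whole vertex set: maximum over partitions of `V`
into `n` connected bundles of the minimum utility of a bundle. -/
noncomputable def mms (G : SimpleGraph V) (u : Finset V → ℝ) (n : ℕ) : ℝ :=
  sSup ((fun A : Fin n → Finset V => ⨅ i, u (A i)) '' {A | IsConnAlloc G A})

/-- Agents `i` and `j` are adjacent under allocation `A`. -/
def AdjUnder (G : SimpleGraph V) {n : ℕ} (A : Fin n → Finset V) (i j : Fin n) : Prop :=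
  ∃ v ∈ A i, ∃ w ∈ A j, G.Adj v w

/-- An allocation is `α`-PMMS if every agent with an empty bundle, and every agent with
respect to each of her neighbours, receives at least `α` times her pairwise maximin share. -/
def IsAlphaPMMS (G : SimpleGraph V) {n : ℕ} (u : Fin n → Finset V → ℝ)
    (A : Fin n → Finset V) (α : ℝ) : Prop :=
  ∀ i j : Fin n, i ≠ j → (A i = ∅ ∨ AdjUnder G A i j) →
    α * pmms G (u i) (A i ∪ A j) ≤ u i (A i)

/-- An allocation is `α`-MMS if every agent receives at least `α` times her maximin share. -/
def IsAlphaMMS (G : SimpleGraph V) {n : ℕ} (u : Fin n → Finset V → ℝ)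
    (A : Fin n → Finset V) (α : ℝ) : Prop :=
  ∀ i : Fin n, α * mms G (u i) n ≤ u i (A i)

/-- An additive (nonnegative) utility function. -/
def AdditiveUtil (u : Finset V → ℝ) : Prop :=
  (∀ X : Finset V, u X = ∑ v ∈ X, u {v}) ∧ ∀ v : V, 0 ≤ u {v}

/-- A binary additive utility function. -/
def BinaryAdditiveUtil (u : Finset V → ℝ) : Prop :=
  (∀ X : Finset V, u X = ∑ v ∈ X, u {v}) ∧ ∀ v : V, u {v} = 0 ∨ u {v} = 1

/-- A monotone (nonnegative) utility function. -/
def MonotoneUtil (u : Finset V → ℝ) : Prop :=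
  (∀ X Y : Finset V, X ⊆ Y → u X ≤ u Y) ∧ 0 ≤ u ∅

/-- An allocation is `α`-EF1. -/
def IsAlphaEF1 {n : ℕ} (u : Fin n → Finset V → ℝ) (A : Fin n → Finset V) (α : ℝ) : Prop :=
  ∀ i j : Fin n, i ≠ j → A j ≠ ∅ → ∃ v ∈ A j, α * u i ((A j).erase v) ≤ u i (A i)

/-- An allocation is EFX (envy-free up to any item). -/
def IsEFX {n : ℕ} (u : Fin n → Finset V → ℝ) (A : Fin n → Finset V) : Prop :=
  ∀ i j : Fin n, i ≠ j → A j ≠ ∅ → ∀ v ∈ A j, u i ((A j).erase v) ≤ u i (A i)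

/-- The number of agents receiving positive utility. -/
noncomputable def nashCount {n : ℕ} (u : Fin n → Finset V → ℝ) (A : Fin n → Finset V) : ℕ :=
  (Finset.univ.filter fun i : Fin n => 0 < u i (A i)).card

/-- The product of the positive utilities. -/
noncomputable def nashProd {n : ℕ} (u : Fin n → Finset V → ℝ) (A : Fin n → Finset V) : ℝ :=
  ∏ i ∈ Finset.univ.filter (fun i : Fin n => 0 < u i (A i)), u i (A i)

/-- A maximum Nash welfare (MNW) connected allocation: maximizes the number of agents with
positive utility and, subject to that, the product of the positive utilities. -/
def IsMNW (G : SimpleGraph V) {n : ℕ} (u : Fin n → Finset V → ℝ)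
    (A : Fin n → Finset V) : Prop :=
  IsConnAlloc G A ∧
  (∀ B : Fin n → Finset V, IsConnAlloc G B → nashCount u B ≤ nashCount u A) ∧
  (∀ B : Fin n → Finset V, IsConnAlloc G B →
    nashCount u B = nashCount u A → nashProd u B ≤ nashProd u A)

/-- `A'` is a Pareto-improvement of `A`. -/
def ParetoImproves {n : ℕ} (u : Fin n → Finset V → ℝ) (A' A : Fin n → Finset V) : Prop :=
  (∀ i, u i (A i) ≤ u i (A' i)) ∧ ∃ j, u j (A j) < u j (A' j)

/-- A connected allocation is Pareto-optimal if no connected allocation Pareto-improves it. -/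
def IsParetoOptimal (G : SimpleGraph V) {n : ℕ} (u : Fin n → Finset V → ℝ)
    (A : Fin n → Finset V) : Prop :=
  ∀ B : Fin n → Finset V, IsConnAlloc G B → ¬ ParetoImproves u B A

/-- The vector of agents' utilities rearranged in increasing order. -/
noncomputable def sortedUtils {n : ℕ} (u : Fin n → Finset V → ℝ)
    (A : Fin n → Finset V) : List ℝ :=
  (((Finset.univ : Finset (Fin n)).val.map fun i => u i (A i)).sort (· ≤ ·))

/-- `A'` is a leximin improvement of `A`: the sorted utility vector of `A'` is
lexicographically greater than that of `A`. -/
def LeximinImproves {n : ℕ} (u : Fin n → Finset V → ℝ) (A' A : Fin n → Finset V) : Prop :=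
  List.Lex (· < ·) (sortedUtils u A) (sortedUtils u A')

/-- A connected leximin allocation. -/
def IsLeximin (G : SimpleGraph V) {n : ℕ} (u : Fin n → Finset V → ℝ)
    (A : Fin n → Finset V) : Prop :=
  IsConnAlloc G A ∧ ∀ B : Fin n → Finset V, IsConnAlloc G B → ¬ LeximinImproves u B A

/-- `G` is a star: there is a central vertex adjacent to exactly all other vertices. -/
def IsStar (G : SimpleGraph V) : Prop :=
  ∃ c : V, ∀ a b : V, G.Adj a b ↔ a ≠ b ∧ (a = c ∨ b = c)

/-- A submodular utility function. -/
def SubmodularUtil (u : Finset V → ℝ) : Prop :=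
  ∀ X Y : Finset V, u (X ∪ Y) + u (X ∩ Y) ≤ u X + u Y

/-- A utility function with binary marginal gains (and `u ∅ = 0`). -/
def BinaryMarginalGains (u : Finset V → ℝ) : Prop :=
  u ∅ = 0 ∧ ∀ (X : Finset V) (v : V),
    u (insert v X) - u X = 0 ∨ u (insert v X) - u X = 1

/-- On the path with `m` vertices (edges numbered `1, …, m-1` from left to right),
`itv m x y` is the bundle `[x, y]` of all vertices between positions `x` and `y`. -/
def itv (m x y : ℕ) : Finset (Fin m) :=
  Finset.univ.filter fun v : Fin m => x ≤ v.val ∧ v.val < y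

end GraphFair

/-- The cycle of length four. -/
def cycle4 : SimpleGraph (Fin 4) := SimpleGraph.fromRel fun a b => b = a + 1

section Aux
open GraphFair

/-- Agent 0's utility at the `ℕ` level: rank of the partition matroid `{0,1},{2,3}`. -/
def f0 (X : Finset (Fin 4)) : ℕ :=
  (if 0 ∈ X ∨ 1 ∈ X then 1 else 0) + (if 2 ∈ X ∨ 3 ∈ X then 1 else 0)

/-- Agent 1's utility at the `ℕ` level: rank of the partition matroid `{1,2},{0,3}`. -/
def f1 (X : Finset (Fin 4)) : ℕ :=
  (if 1 ∈ X ∨ 2 ∈ X then 1 else 0) + (if 0 ∈ X ∨ 3 ∈ X then 1 else 0)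

/-- The two utility functions of the counterexample. -/
def uex (i : Fin 2) (X : Finset (Fin 4)) : ℝ :=
  if i = 0 then (f0 X : ℝ) else (f1 X : ℝ)

lemma uex0 (X : Finset (Fin 4)) : uex 0 X = (f0 X : ℝ) := by simp [uex]

lemma uex1 (X : Finset (Fin 4)) : uex 1 X = (f1 X : ℝ) := by
  simp only [uex, if_neg (by decide : ¬ (1 : Fin 2) = 0)]

lemma adj01 : cycle4.Adj 0 1 := by unfold cycle4; rw [SimpleGraph.fromRel_adj]; decide
lemma adj12 : cycle4.Adj 1 2 := by unfold cycle4; rw [SimpleGraph.fromRel_adj]; decide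
lemma adj23 : cycle4.Adj 2 3 := by unfold cycle4; rw [SimpleGraph.fromRel_adj]; decide
lemma adj30 : cycle4.Adj 3 0 := by unfold cycle4; rw [SimpleGraph.fromRel_adj]; decide
lemma nadj02 : ¬ cycle4.Adj 0 2 := by unfold cycle4; rw [SimpleGraph.fromRel_adj]; decide
lemma nadj13 : ¬ cycle4.Adj 1 3 := by unfold cycle4; rw [SimpleGraph.fromRel_adj]; decide

lemma induce_adj_iff (s : Set (Fin 4)) (p q : s) :
    (cycle4.induce s).Adj p q ↔ cycle4.Adj p q := by
  simp [SimpleGraph.comap_adj]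

/-- A pair of adjacent vertices forms a connected bundle. -/
lemma conn_pair {a b : Fin 4} (h : cycle4.Adj a b) :
    BundleConn cycle4 ({a, b} : Finset (Fin 4)) := by
  right
  rw [SimpleGraph.connected_iff]
  refine ⟨?_, ⟨⟨a, by simp⟩⟩⟩
  rintro ⟨x, hx⟩ ⟨y, hy⟩
  have hx' : x = a ∨ x = b := by simpa using hx
  have hy' : y = a ∨ y = b := by simpa using hy
  rcases hx' with hx' | hx' <;> rcases hy' with hy' | hy'
  · rw [show (⟨x, hx⟩ : (({a,b} : Finset (Fin 4)) : Set (Fin 4))) = ⟨y, hy⟩ from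
      Subtype.ext (hx'.trans hy'.symm)]
  · exact SimpleGraph.Adj.reachable (by rw [induce_adj_iff]; simp only [hx', hy']; exact h)
  · exact (SimpleGraph.Adj.reachable (by rw [induce_adj_iff]; simp only [hx', hy']; exact h)).symm
  · rw [show (⟨x, hx⟩ : (({a,b} : Finset (Fin 4)) : Set (Fin 4))) = ⟨y, hy⟩ from
      Subtype.ext (hx'.trans hy'.symm)]

/-- A pair of distinct non-adjacent vertices is not a connected bundle. -/
lemma not_conn_pair {a b : Fin 4} (hne : a ≠ b) (h : ¬ cycle4.Adj a b) :
    ¬ BundleConn cycle4 ({a, b} : Finset (Fin 4)) := by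
  rintro (habs | hc)
  · exact absurd (habs ▸ Finset.mem_insert_self a {b}) (Finset.notMem_empty a)
  have noadj : ∀ (p q : (({a,b} : Finset (Fin 4)) : Set (Fin 4))),
      ¬ (cycle4.induce (({a,b} : Finset (Fin 4)) : Set (Fin 4))).Adj p q := by
    rintro ⟨p, hp⟩ ⟨q, hq⟩ hpq
    rw [induce_adj_iff] at hpq
    have hpq : cycle4.Adj p q := hpq
    have hp' : p = a ∨ p = b := by simpa using hp
    have hq' : q = a ∨ q = b := by simpa using hq
    rcases hp' with h1 | h1 <;> rcases hq' with h2 | h2 <;> rw [h1, h2] at hpq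
    · exact cycle4.irrefl hpq
    · exact h hpq
    · exact h hpq.symm
    · exact cycle4.irrefl hpq
  have key : ∀ x y : (({a,b} : Finset (Fin 4)) : Set (Fin 4)),
      (cycle4.induce (({a,b} : Finset (Fin 4)) : Set (Fin 4))).Reachable x y → x = y := by
    intro x y hxy
    obtain ⟨w⟩ := hxy
    cases w with
    | nil => rfl
    | cons h' _ => exact absurd h' (noadj _ _)
  exact hne (congrArg Subtype.val (key ⟨a, by simp⟩ ⟨b, by simp⟩ (hc.preconnected _ _)))

/-- Any nontrivial bipartition of the cycle has a crossing edge. -/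
lemma crossing (S : Finset (Fin 4)) (h1 : S ≠ ∅) (h2 : Sᶜ ≠ ∅) :
    ∃ v ∈ S, ∃ w ∈ Sᶜ, cycle4.Adj v w := by
  have key : ∀ S : Finset (Fin 4), S ≠ ∅ → Sᶜ ≠ ∅ →
      ∃ v ∈ S, ∃ w ∈ Sᶜ, v ≠ w ∧ (w = v + 1 ∨ v = w + 1) := by decide
  obtain ⟨v, hv, w, hw, h3, h4⟩ := key S h1 h2
  refine ⟨v, hv, w, hw, ?_⟩
  unfold cycle4; rw [SimpleGraph.fromRel_adj]; exact ⟨h3, h4⟩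

lemma pmms_lb (i : Fin 2) : (2 : ℝ) ≤ pmms cycle4 (uex i) Finset.univ := by
  have hb : BddAbove ((fun p : Finset (Fin 4) × Finset (Fin 4) =>
      min (uex i p.1) (uex i p.2)) '' Part2 cycle4 Finset.univ) :=
    ((Set.toFinite (Part2 cycle4 Finset.univ)).image _).bddAbove
  fin_cases i
  · have hmem : min (uex 0 ({1,2} : Finset (Fin 4))) (uex 0 ({0,3} : Finset (Fin 4))) ∈
        ((fun p : Finset (Fin 4) × Finset (Fin 4) =>
          min (uex 0 p.1) (uex 0 p.2)) '' Part2 cycle4 Finset.univ) := by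
      refine ⟨({1,2}, {0,3}), ⟨by decide, by decide, conn_pair adj12, ?_⟩, rfl⟩
      rw [show ({0,3} : Finset (Fin 4)) = {3,0} from by decide]
      exact conn_pair adj30
    have h2 := le_csSup hb hmem
    have e1 : f0 ({1,2} : Finset (Fin 4)) = 2 := by decide
    have e2 : f0 ({0,3} : Finset (Fin 4)) = 2 := by decide
    rw [uex0, uex0, e1, e2] at h2
    simpa [pmms] using h2
  · have hmem : min (uex 1 ({0,1} : Finset (Fin 4))) (uex 1 ({2,3} : Finset (Fin 4))) ∈
        ((fun p : Finset (Fin 4) × Finset (Fin 4) =>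
          min (uex 1 p.1) (uex 1 p.2)) '' Part2 cycle4 Finset.univ) := by
      exact ⟨({0,1}, {2,3}), ⟨by decide, by decide, conn_pair adj01, conn_pair adj23⟩, rfl⟩
    have h2 := le_csSup hb hmem
    have e1 : f1 ({0,1} : Finset (Fin 4)) = 2 := by decide
    have e2 : f1 ({2,3} : Finset (Fin 4)) = 2 := by decide
    rw [uex1, uex1, e1, e2] at h2
    simpa [pmms] using h2

end Aux

open GraphFair in
/-- There exist two submodular utility functions with binary marginal gains
for two agents on a cycle of length four such that no connected allocation is PMMS. -/
theorem exists_cycle4_no_pmms_submodular :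
    ∃ u : Fin 2 → Finset (Fin 4) → ℝ,
      (∀ i, SubmodularUtil (u i) ∧ BinaryMarginalGains (u i)) ∧
      ∀ A : Fin 2 → Finset (Fin 4), IsConnAlloc cycle4 A →
        ¬ IsAlphaPMMS cycle4 u A 1 := by
  refine ⟨uex, ?_, ?_⟩
  · intro i
    rcases (by omega : i = 0 ∨ i = 1) with rfl | rfl
    · refine ⟨?_, ?_, ?_⟩
      · intro X Y
        rw [uex0, uex0, uex0, uex0]
        exact_mod_cast (by decide : ∀ X Y : Finset (Fin 4),
          f0 (X ∪ Y) + f0 (X ∩ Y) ≤ f0 X + f0 Y) X Y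
      · rw [uex0]; norm_num [show f0 ∅ = 0 from by decide]
      · intro X v
        rw [uex0, uex0]
        rcases (by decide : ∀ (X : Finset (Fin 4)) (v : Fin 4),
            f0 (insert v X) = f0 X ∨ f0 (insert v X) = f0 X + 1) X v with h | h <;>
          rw [h] <;> [left; right] <;> push_cast <;> ring
    · refine ⟨?_, ?_, ?_⟩
      · intro X Y
        rw [uex1, uex1, uex1, uex1]
        exact_mod_cast (by decide : ∀ X Y : Finset (Fin 4),
          f1 (X ∪ Y) + f1 (X ∩ Y) ≤ f1 X + f1 Y) X Y
      · rw [uex1]; norm_num [show f1 ∅ = 0 from by decide]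
      · intro X v
        rw [uex1, uex1]
        rcases (by decide : ∀ (X : Finset (Fin 4)) (v : Fin 4),
            f1 (insert v X) = f1 X ∨ f1 (insert v X) = f1 X + 1) X v with h | h <;>
          rw [h] <;> [left; right] <;> push_cast <;> ring
  · rintro A ⟨hcov, hdis, hconn⟩ hP
    have huniv : A 0 ∪ A 1 = Finset.univ := by
      ext v
      simp only [Finset.mem_union, Finset.mem_univ, iff_true]
      obtain ⟨i, hi⟩ := hcov v
      fin_cases i
      · exact Or.inl hi
      · exact Or.inr hi
    by_cases h0 : A 0 = ∅
    · have h := hP 0 1 (by decide) (Or.inl h0)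
      rw [huniv, h0, uex0, one_mul] at h
      have := pmms_lb 0
      rw [show f0 ∅ = 0 from by decide] at h
      norm_num at h
      linarith
    by_cases h1 : A 1 = ∅
    · have h := hP 1 0 (by decide) (Or.inl h1)
      rw [Finset.union_comm, huniv, h1, uex1, one_mul] at h
      have := pmms_lb 1
      rw [show f1 ∅ = 0 from by decide] at h
      norm_num at h
      linarith
    -- both bundles nonempty
    have hcomp : A 1 = (A 0)ᶜ := by
      ext v
      simp only [Finset.mem_compl]
      constructor
      · intro hv hv'
        exact (Finset.disjoint_left.mp (hdis 0 1 (by decide)) hv' hv)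
      · intro hv
        obtain ⟨i, hi⟩ := hcov v
        fin_cases i
        · exact absurd hi hv
        · exact hi
    obtain ⟨v, hv, w, hw, hvw⟩ := crossing (A 0) h0 (hcomp ▸ h1)
    have hw' : w ∈ A 1 := by rw [hcomp]; exact hw
    have hadj : AdjUnder cycle4 A 0 1 := ⟨v, hv, w, hw', hvw⟩
    have h01 := hP 0 1 (by decide) (Or.inr hadj)
    have h10 := hP 1 0 (by decide) (Or.inr ⟨w, hw', v, hv, hvw.symm⟩)
    rw [huniv, uex0, one_mul] at h01
    rw [Finset.union_comm, huniv, uex1, one_mul] at h10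
    have hf0 : 2 ≤ f0 (A 0) := by exact_mod_cast le_trans (pmms_lb 0) h01
    have hf1 : 2 ≤ f1 ((A 0)ᶜ) := by
      rw [← hcomp]; exact_mod_cast le_trans (pmms_lb 1) h10
    have hcases : A 0 = {0, 2} ∨ A 0 = {1, 3} :=
      (by decide : ∀ S : Finset (Fin 4), 2 ≤ f0 S → 2 ≤ f1 Sᶜ →
        S = {0,2} ∨ S = {1,3}) (A 0) hf0 hf1
    have hc0 := hconn 0
    rcases hcases with hA | hA <;> rw [hA] at hc0
    · exact not_conn_pair (by decide) nadj02 hc0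
    · exact not_conn_pair (by decide) nadj13 hc0
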